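/- Let Σ = {1,...,N}^ℕ be the full shift on N symbols and suppose a probability measure ω on Σ and a function ν assigning to each cylinder I a positive weight with ν(Σ)=1 and ν additive over immediate subcylinders are given. Suppose there are K ∈ ℕ, β < 1 such that for every cylinder I of length n there is K(I) ≤ K with ∑_{J : |J|=K(I)} √(ω(IJ) ν(IJ)) ≤ β √(ω(I) ν(I)). Then for every n > K, ∑_{I : |I| = n} √(ω(I) ν(I)) ≤ β̃^n for some β̃ with β < β̃ < 1 depending only on β, K, and N. -/

import Mathlib

open scoped BigOperators

theorem exponential_decay_of_sqrt_sums (N : ℕ) (hN : 2 ≤ N)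
    (ω ν : List (Fin N) → ℝ)
    (hω1 : ω [] = 1) (hν1 : ν [] = 1)
    (hωnonneg : ∀ I, 0 ≤ ω I) (hνpos : ∀ I, 0 < ν I)
    (hωadd : ∀ I, ω I = ∑ j : Fin N, ω (I ++ [j]))
    (hνadd : ∀ I, ν I = ∑ j : Fin N, ν (I ++ [j]))
    (K : ℕ) (β : ℝ) (hβ0 : 0 < β) (hβ1 : β < 1)
    (hstep : ∀ I : List (Fin N), ∃ k, 1 ≤ k ∧ k ≤ K ∧
      ∑ J : Fin k → Fin N,
          Real.sqrt (ω (I ++ List.ofFn J) * ν (I ++ List.ofFn J)) ≤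
        β * Real.sqrt (ω I * ν I)) :
    ∃ β' : ℝ, β < β' ∧ β' < 1 ∧ ∀ n, K < n →
      ∑ I : Fin n → Fin N,
          Real.sqrt (ω (List.ofFn I) * ν (List.ofFn I)) ≤ β' ^ n := by
  classical
  obtain ⟨k0, hk01, hk0K, _⟩ := hstep []
  have hK1 : 1 ≤ K := le_trans hk01 hk0K
  have hK0 : (0:ℕ) < K := hK1
  set s : List (Fin N) → ℝ := fun I => Real.sqrt (ω I * ν I) with hs
  set T : ℕ → List (Fin N) → ℝ :=
    fun m I => ∑ J : Fin m → Fin N, s (I ++ List.ofFn J) with hT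
  have hT0 : ∀ I, T 0 I = s I := by
    intro I; simp [hT]
  -- one-step Cauchy-Schwarz
  have hB : ∀ I, ∑ j : Fin N, s (I ++ [j]) ≤ s I := by
    intro I
    have h1 : ∀ j : Fin N, s (I ++ [j]) =
        Real.sqrt (ω (I ++ [j])) * Real.sqrt (ν (I ++ [j])) := by
      intro j; rw [hs]; exact Real.sqrt_mul (hωnonneg _) _
    calc ∑ j : Fin N, s (I ++ [j])
        = ∑ j : Fin N, Real.sqrt (ω (I ++ [j])) * Real.sqrt (ν (I ++ [j])) := by
          simp_rw [h1]
      _ ≤ Real.sqrt (∑ j : Fin N, ω (I ++ [j])) *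
          Real.sqrt (∑ j : Fin N, ν (I ++ [j])) :=
          Real.sum_sqrt_mul_sqrt_le _ (fun j => hωnonneg _) (fun j => (hνpos _).le)
      _ = s I := by
          rw [← hωadd, ← hνadd]
          exact (Real.sqrt_mul (hωnonneg I) _).symm
  -- recursion for T
  have hTrec : ∀ m I, T (m+1) I = ∑ j : Fin N, T m (I ++ [j]) := by
    intro m I
    simp only [hT]
    rw [← ((Fin.consEquiv (fun _ : Fin (m+1) => Fin N)).sum_comp
      (fun J => s (I ++ List.ofFn J)))]
    rw [Fintype.sum_prod_type]
    apply Finset.sum_congr rfl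
    intro j _
    apply Finset.sum_congr rfl
    intro J _
    congr 1
    simp [List.ofFn_succ, Fin.cons_zero, Fin.cons_succ]
  -- monotonicity
  have hC : ∀ m I, T (m+1) I ≤ T m I := by
    intro m
    induction m with
    | zero =>
      intro I
      rw [hTrec, hT0]
      calc ∑ j : Fin N, T 0 (I ++ [j]) = ∑ j : Fin N, s (I ++ [j]) := by
            simp_rw [hT0]
        _ ≤ s I := hB I
    | succ m ih =>
      intro I
      rw [hTrec, hTrec]
      exact Finset.sum_le_sum fun j _ => ih _
  have hD : ∀ k m, k ≤ m → ∀ I, T m I ≤ T k I := by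
    intro k m hkm
    induction m, hkm using Nat.le_induction with
    | base => intro I; exact le_rfl
    | succ m hm ih => intro I; exact (hC m I).trans (ih I)
  -- step at depth K
  have hE : ∀ I, T K I ≤ β * s I := by
    intro I
    obtain ⟨k, hk1, hkK, hk⟩ := hstep I
    exact (hD k K hkK I).trans hk
  have hF : ∀ n I, T (n + K) I ≤ β * T n I := by
    intro n
    induction n with
    | zero =>
      intro I
      rw [Nat.zero_add, hT0]
      exact hE I
    | succ n ih =>
      intro I
      have he : n + 1 + K = (n + K) + 1 := by omega
      rw [he, hTrec, hTrec]
      calc ∑ j : Fin N, T (n+K) (I ++ [j])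
          ≤ ∑ j : Fin N, β * T n (I ++ [j]) :=
            Finset.sum_le_sum fun j _ => ih _
        _ = β * ∑ j : Fin N, T n (I ++ [j]) := by rw [Finset.mul_sum]
  have hs1 : s [] = 1 := by simp [hs, hω1, hν1]
  have hG : ∀ n, T n [] ≤ β ^ (n / K) := by
    intro n
    induction n using Nat.strong_induction_on with
    | _ n ih =>
      by_cases h : n < K
      · rw [Nat.div_eq_of_lt h, pow_zero]
        calc T n [] ≤ T 0 [] := hD 0 n (Nat.zero_le _) []
          _ = 1 := by rw [hT0, hs1]
      · push_neg at h
        have hsub : n - K < n := Nat.sub_lt (lt_of_lt_of_le hK0 h) hK0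
        have h1 : T n [] ≤ β * T (n - K) [] := by
          have := hF (n - K) []
          rwa [Nat.sub_add_cancel h] at this
        have h2 : T (n - K) [] ≤ β ^ ((n - K) / K) := ih _ hsub
        calc T n [] ≤ β * T (n - K) [] := h1
          _ ≤ β * β ^ ((n - K) / K) := by
              exact mul_le_mul_of_nonneg_left h2 hβ0.le
          _ = β ^ ((n - K) / K + 1) := by rw [pow_succ, mul_comm]
          _ = β ^ (n / K) := by rw [← Nat.div_eq_sub_div hK0 h]
  -- choose β'
  refine ⟨β ^ ((2 * (K:ℝ))⁻¹ : ℝ), ?_, ?_, ?_⟩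
  · have h2K : (1:ℝ) < 2 * (K:ℝ) := by
      have : (1:ℝ) ≤ (K:ℝ) := by exact_mod_cast hK1
      nlinarith
    have := Real.rpow_lt_rpow_of_exponent_gt hβ0 hβ1
      (show (2 * (K:ℝ))⁻¹ < 1 by
        rw [inv_lt_one_iff₀]; right; exact h2K)
    simpa [Real.rpow_one] using this
  · exact Real.rpow_lt_one hβ0.le hβ1 (by positivity)
  · intro n hKn
    have hsum : ∑ I : Fin n → Fin N,
        Real.sqrt (ω (List.ofFn I) * ν (List.ofFn I)) = T n [] := by
      simp [hT, hs]
    rw [hsum]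
    refine (hG n).trans ?_
    -- β ^ (n / K) ≤ (β ^ (2K)⁻¹) ^ n
    have hq1 : 1 ≤ n / K := (Nat.one_le_div_iff hK0).mpr hKn.le
    have hnat : n ≤ n / K * (2 * K) := by
      have hlt : n < n / K * K + K := Nat.lt_div_mul_add hK0
      have h2 : K ≤ n / K * K := Nat.le_mul_of_pos_left K hq1
      calc n ≤ n / K * K + K := hlt.le
        _ ≤ n / K * K + n / K * K := Nat.add_le_add_left h2 _
        _ = n / K * (2 * K) := by ring
    have hexp : (n:ℝ) * (2 * (K:ℝ))⁻¹ ≤ ((n / K : ℕ) : ℝ) := by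
      rw [mul_inv_le_iff₀ (by positivity)]
      have hc : ((n:ℕ):ℝ) ≤ ((n / K * (2 * K) : ℕ) : ℝ) := Nat.cast_le.mpr hnat
      push_cast at hc
      linarith
    calc β ^ (n / K) = β ^ (((n / K : ℕ) : ℝ)) := by
          rw [Real.rpow_natCast]
      _ ≤ β ^ ((n:ℝ) * (2 * (K:ℝ))⁻¹) :=
          Real.rpow_le_rpow_of_exponent_ge hβ0 hβ1.le hexp
      _ = (β ^ ((2 * (K:ℝ))⁻¹ : ℝ)) ^ n := by
          rw [mul_comm, Real.rpow_mul hβ0.le, Real.rpow_natCast]
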